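/- arXiv:2108.03858 — 2 statements merged into one kernel-verified Lean document; each statement's English description precedes it below -/
import Mathlib

section
/- Let q, a, b ∈ ℂ with q ≠ 0, qⁿ ≠ 1 for nonzero n. Then for each n ≥ 0, lim_{b→−∞} p_n(x; −q^{−1} a b^{−1}, b; q) = y_n(x; a; q), where p_n(x; α, β; q) = ₂φ₁(q^{−n}, q^{n+1}αβ; qα; q, qx) is the little q-Jacobi polynomial and y_n(x; a; q) = ₂φ₁(q^{−n}, −a qⁿ; 0; q, qx) is the q-Bessel polynomial. -/
open Finset Filter

/-- q-shifted factorial (a;q)_k -/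
noncomputable def qPoch (a q : ℂ) (k : ℕ) : ℂ := ∏ i ∈ range k, (1 - a * q ^ i)

/-- little q-Jacobi polynomial p_n(x;α,β;q) = ₂φ₁(q^{-n}, q^{n+1}αβ; qα; q, qx). -/
noncomputable def littleqJacobi (q α β : ℂ) (n : ℕ) (x : ℂ) : ℂ :=
  ∑ k ∈ range (n + 1),
    qPoch (q ^ (-(n : ℤ))) q k * qPoch (q ^ (n + 1) * α * β) q k /
      (qPoch q q k * qPoch (q * α) q k) * (q * x) ^ k

/-- q-Bessel polynomial y_n(x;a;q) = ₂φ₁(q^{-n}, -a qⁿ; 0; q, qx);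
the lower parameter 0 contributes (0;q)_k = 1. -/
noncomputable def qBessel (q a : ℂ) (n : ℕ) (x : ℂ) : ℂ :=
  ∑ k ∈ range (n + 1),
    qPoch (q ^ (-(n : ℤ))) q k * qPoch (-a * q ^ n) q k / qPoch q q k * (q * x) ^ k


lemma qPoch_zero' (q : ℂ) (k : ℕ) : qPoch 0 q k = 1 := by
  simp [qPoch]

lemma qPoch_q_ne_zero (q : ℂ) (hq1 : ∀ n : ℤ, n ≠ 0 → q ^ n ≠ 1) (k : ℕ) :
    qPoch q q k ≠ 0 := by
  unfold qPoch
  refine Finset.prod_ne_zero_iff.mpr fun i _ => ?_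
  intro h
  have h1 : q ^ (((i : ℕ) + 1 : ℕ) : ℤ) = 1 := by
    rw [zpow_natCast]
    have : q * q ^ i = 1 := by linear_combination -h
    rw [pow_succ]; linear_combination this
  exact hq1 _ (by positivity) h1

theorem littleqJacobi_to_qBessel (q a : ℂ)
    (hq : q ≠ 0) (hq1 : ∀ n : ℤ, n ≠ 0 → q ^ n ≠ 1)
    (n : ℕ) (x : ℂ) :
    Tendsto (fun b : ℂ => littleqJacobi q (-q⁻¹ * a * b⁻¹) b n x)
      (Bornology.cobounded ℂ) (nhds (qBessel q a n x)) := by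
  set G : ℂ → ℂ := fun t => ∑ k ∈ Finset.range (n + 1),
    qPoch (q ^ (-(n : ℤ))) q k * qPoch (-a * q ^ n) q k /
      (qPoch q q k * qPoch (-a * t) q k) * (q * x) ^ k with hGdef
  have hcont : Tendsto G (nhds 0) (nhds (qBessel q a n x)) := by
    rw [hGdef]
    unfold qBessel
    apply tendsto_finset_sum
    intro k _
    apply Tendsto.mul _ tendsto_const_nhds
    have hc : Continuous fun t : ℂ => qPoch q q k * qPoch (-a * t) q k := by
      unfold qPoch
      fun_prop
    have hd : Tendsto (fun t : ℂ => qPoch q q k * qPoch (-a * t) q k) (nhds 0)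
        (nhds (qPoch q q k)) := by
      simpa [ContinuousAt, qPoch_zero'] using hc.continuousAt (x := 0)
    exact tendsto_const_nhds.div hd (qPoch_q_ne_zero q hq1 k)
  have h1 : Tendsto (fun b : ℂ => G b⁻¹) (Bornology.cobounded ℂ) (nhds (qBessel q a n x)) :=
    hcont.comp tendsto_inv₀_cobounded
  apply h1.congr'
  filter_upwards [Bornology.eventually_ne_cobounded 0] with b hb
  unfold littleqJacobi
  rw [hGdef]
  refine Finset.sum_congr rfl fun k _ => ?_
  have e1 : q ^ (n + 1) * (-q⁻¹ * a * b⁻¹) * b = -a * q ^ n := by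
    field_simp; ring
  have e2 : q * (-q⁻¹ * a * b⁻¹) = -a * b⁻¹ := by
    field_simp
  rw [e1, e2]
end

section
/- Let q, a ∈ ℂ generic. For every n ≥ 0 and x ≠ 0: ₂φ₁(q^{−n}, −a qⁿ; 0; q, qx) = (−1)ⁿ q^{n²} aⁿ ₃φ₀(q^{−n}, −a qⁿ, x^{−1}; —; q, −a^{−1} x). -/
open Finset Polynomial

lemma qPoch_succ (a q : ℂ) (k : ℕ) :
    qPoch a q (k+1) = qPoch a q k * (1 - a * q ^ k) := by
  simp [qPoch, prod_range_succ]

lemma qPoch_succ' (a q : ℂ) (k : ℕ) :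
    qPoch a q (k+1) = (1 - a) * qPoch (a*q) q k := by
  rw [qPoch, prod_range_succ', pow_zero, mul_one, mul_comm]
  congr 1
  apply prod_congr rfl
  intro i _
  ring

noncomputable def cL (q a : ℂ) (n k : ℕ) : ℂ :=
  qPoch ((q^n)⁻¹) q k * qPoch (-(a * q^n)) q k / qPoch q q k * q^k

noncomputable def wR (q a : ℂ) (n k : ℕ) : ℂ :=
  qPoch ((q^n)⁻¹) q k * qPoch (-(a * q^n)) q k / qPoch q q k *
    (-1)^(n+k) * a^(n-k) * q^(n^2 - k*(k-1))

noncomputable def Pp (q x : ℂ) (k : ℕ) : ℂ := ∏ i ∈ range k, (x - q^i)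

noncomputable def LP (q a : ℂ) (n : ℕ) : Polynomial ℂ :=
  ∑ k ∈ range (n+1), C (cL q a n k) * X^k

noncomputable def RPw (q a : ℂ) (n : ℕ) : Polynomial ℂ :=
  ∑ k ∈ range (n+1), C (wR q a n k) * ∏ i ∈ range k, (X - C (q^i))

lemma LP_eval (q a x : ℂ) (n : ℕ) :
    (LP q a n).eval x = ∑ k ∈ range (n+1), cL q a n k * x^k := by
  simp [LP, eval_finset_sum]

lemma RPw_eval (q a x : ℂ) (n : ℕ) :
    (RPw q a n).eval x = ∑ k ∈ range (n+1), wR q a n k * Pp q x k := by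
  simp [RPw, eval_finset_sum, eval_prod, Pp]

set_option linter.unusedSectionVars false

section
variable {q : ℂ} (hq : q ≠ 0) (hq1 : ∀ m : ℤ, m ≠ 0 → q ^ m ≠ 1)

include hq1 in
lemma one_sub_qpow_ne (k : ℕ) (hk : k ≠ 0) : (1:ℂ) - q^k ≠ 0 := by
  intro h
  exact hq1 (k:ℤ) (by exact_mod_cast hk) (by rw [zpow_natCast]; linear_combination -h)

include hq1 in
lemma qPoch_q_ne (k : ℕ) : qPoch q q k ≠ 0 := by
  rw [qPoch]
  apply prod_ne_zero_iff.mpr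
  intro i _
  have : (1:ℂ) - q^(i+1) ≠ 0 := one_sub_qpow_ne hq1 (i+1) (Nat.succ_ne_zero i)
  rw [pow_succ'] at this
  simpa using this

include hq in
lemma inv_shift (n : ℕ) : ((q^(n+1))⁻¹) * q = (q^n)⁻¹ := by
  rw [pow_succ, mul_inv, mul_assoc, inv_mul_cancel₀ hq, mul_one]

include hq in
lemma pochb_peel (n k : ℕ) : qPoch ((q^(n+1))⁻¹) q (k+1)
    = (1 - (q^(n+1))⁻¹) * qPoch ((q^n)⁻¹) q k := by
  rw [qPoch_succ', inv_shift hq]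

lemma pochc_peel (a : ℂ) (n k : ℕ) : qPoch (-(a*q^(n+1))) q (k+1)
    = (1 + a*q^(n+1)) * qPoch (-(a*q^2*q^n)) q k := by
  rw [qPoch_succ', show (-(a*q^(n+1)))*q = -(a*q^2*q^n) from by ring]
  congr 1; ring

lemma pochq_peel (k : ℕ) : qPoch q q (k+1) = qPoch q q k * (1 - q^(k+1)) := by
  rw [qPoch_succ, ← pow_succ']

include hq in
lemma pochb_top (n k : ℕ) : qPoch ((q^(n+1))⁻¹) q k * (q^(n+1) - q^k)
    = (q^(n+1) - 1) * qPoch ((q^n)⁻¹) q k := by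
  have h1 : qPoch ((q^(n+1))⁻¹) q k * (1 - (q^(n+1))⁻¹ * q^k)
      = (1 - (q^(n+1))⁻¹) * qPoch ((q^n)⁻¹) q k := by
    rw [← qPoch_succ, qPoch_succ', inv_shift hq]
  have hbb : (q^(n+1)) * (q^(n+1))⁻¹ = 1 := mul_inv_cancel₀ (pow_ne_zero _ hq)
  linear_combination (q^(n+1)) * h1 +
    (qPoch ((q^(n+1))⁻¹) q k * q^k - qPoch ((q^n)⁻¹) q k) * hbb

lemma pochc_top (a : ℂ) (n k : ℕ) : qPoch (-(a*q^(n+1))) q k * (1 + a*q^(n+1)*q^k)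
    = (1 + a*q^(n+1)) * qPoch (-(a*q^2*q^n)) q k := by
  rw [show (1 + a*q^(n+1)*q^k) = 1 - (-(a*q^(n+1)))*q^k from by ring, ← qPoch_succ,
    qPoch_succ', show (-(a*q^(n+1)))*q = -(a*q^2*q^n) from by ring]
  congr 1; ring

include hq hq1 in
lemma cL_succ (a : ℂ) (n k : ℕ) :
    cL q a (n+1) (k+1) * ((q^(k+1) - 1) * q^(n+1))
      = -q * (q^(n+1) - 1) * (1 + a*q^(n+1)) * cL q (a*q^2) n k := by
  have hPq : qPoch q q k ≠ 0 := qPoch_q_ne hq1 k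
  have h1k : (1:ℂ) - q^(k+1) ≠ 0 := one_sub_qpow_ne hq1 (k+1) (Nat.succ_ne_zero k)
  unfold cL
  rw [pochb_peel hq, pochc_peel, pochq_peel]
  field_simp
  ring

include hq in
lemma cL_star2 (a : ℂ) (n k : ℕ) :
    cL q a (n+1) k * ((q^(n+1) - q^k) * (1 + a*q^(n+1)*q^k))
      = (q^(n+1) - 1) * (1 + a*q^(n+1)) * cL q (a*q^2) n k := by
  have h1 := pochb_top hq n k
  have h2 := pochc_top (q := q) a n k
  simp only [cL, div_eq_mul_inv]
  linear_combination (qPoch (-(a*q^(n+1))) q k * (1 + a*q^(n+1)*q^k) *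
      (qPoch q q k)⁻¹ * q^k) * h1 +
    ((q^(n+1) - 1) * qPoch ((q^n)⁻¹) q k * (qPoch q q k)⁻¹ * q^k) * h2

include hq hq1 in
lemma L_star (a x : ℂ) (n : ℕ) :
    q^(n+1) * ((LP q a (n+1)).eval (q*x) - (LP q a (n+1)).eval x)
      = -q * (q^(n+1) - 1) * (1 + a*q^(n+1)) * x * (LP q (a*q^2) n).eval x := by
  rw [LP_eval, LP_eval, LP_eval, ← sum_sub_distrib, mul_sum, mul_sum, sum_range_succ']
  have h0 : q^(n+1) * (cL q a (n+1) 0 * (q*x)^0 - cL q a (n+1) 0 * x^0) = 0 := by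
    simp
  rw [h0, add_zero]
  apply sum_congr rfl
  intro k _
  have h := cL_succ hq hq1 a n k
  linear_combination (x^(k+1)) * h

include hq hq1 in
lemma L_star2 (a x : ℂ) (n : ℕ) :
    q^(n+1) * (LP q a (n+1)).eval x + (a*q^(n+1)*q^(n+1) - 1) * (LP q a (n+1)).eval (q*x)
      - a*q^(n+1) * (LP q a (n+1)).eval (q*(q*x))
      = (q^(n+1) - 1) * (1 + a*q^(n+1)) * (LP q (a*q^2) n).eval x := by
  have hL : q^(n+1) * (LP q a (n+1)).eval x
      + (a*q^(n+1)*q^(n+1) - 1) * (LP q a (n+1)).eval (q*x)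
      - a*q^(n+1) * (LP q a (n+1)).eval (q*(q*x))
      = ∑ k ∈ range (n+2),
          cL q a (n+1) k * x^k * ((q^(n+1) - q^k) * (1 + a*q^(n+1)*q^k)) := by
    rw [LP_eval, LP_eval, LP_eval, mul_sum, mul_sum, mul_sum, ← sum_add_distrib,
      ← sum_sub_distrib]
    apply sum_congr rfl
    intro k _
    ring
  rw [hL, sum_range_succ]
  have h0 : cL q a (n+1) (n+1) * x^(n+1) *
      ((q^(n+1) - q^(n+1)) * (1 + a*q^(n+1)*q^(n+1))) = 0 := by ring
  rw [h0, add_zero, LP_eval, mul_sum]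
  apply sum_congr rfl
  intro k _
  have h := cL_star2 hq a n k
  linear_combination (x^k) * h

lemma Pp_step (x : ℂ) (k : ℕ) :
    Pp q (q*x) (k+1) - Pp q x (k+1) = (q^(k+1) - 1) * x * Pp q x k := by
  have h1 : Pp q (q*x) (k+1) = (∏ i ∈ range k, (q*(x - q^i))) * (q*x - 1) := by
    rw [Pp, prod_range_succ', pow_zero]
    congr 1
    apply prod_congr rfl
    intro i _
    rw [pow_succ']
    ring
  have h2 : (∏ i ∈ range k, (q*(x - q^i))) = q^k * Pp q x k := by
    rw [prod_mul_distrib, prod_const, card_range, Pp]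
  have h3 : Pp q x (k+1) = Pp q x k * (x - q^k) := prod_range_succ _ _
  rw [h1, h2, h3]
  ring

include hq hq1 in
lemma wR_succ (a : ℂ) (n k : ℕ) (hk : k ≤ n) :
    wR q a (n+1) (k+1) * ((q^(k+1) - 1) * q^(n+1))
      = -q * (q^(n+1) - 1) * (1 + a*q^(n+1)) * wR q (a*q^2) n k := by
  obtain ⟨d, rfl⟩ := Nat.exists_eq_add_of_le hk
  have hPq : qPoch q q k ≠ 0 := qPoch_q_ne hq1 k
  have h1k : (1:ℂ) - q^(k+1) ≠ 0 := one_sub_qpow_ne hq1 (k+1) (Nat.succ_ne_zero k)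
  have e1 : (k+d+1) - (k+1) = d := by omega
  have e2 : (k+d+1)^2 - (k+1)*((k+1)-1) = d^2 + 2*k*d + k + 2*d + 1 := by
    have h : (k+d+1)^2 = (k+1)*((k+1)-1) + (d^2 + 2*k*d + k + 2*d + 1) := by
      simp only [Nat.add_sub_cancel]
      ring
    rw [h, Nat.add_sub_cancel_left]
  have e3 : (k+d) - k = d := by omega
  have e4 : (k+d)^2 - k*(k-1) = 2*k*d + d^2 + k := by
    have h : (k+d)^2 = k*(k-1) + (2*k*d + d^2 + k) := by
      cases k with
      | zero => simp
      | succ j =>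
        simp only [Nat.succ_sub_one]
        ring
    rw [h, Nat.add_sub_cancel_left]
  unfold wR
  rw [pochb_peel hq, pochc_peel, pochq_peel, e1, e2, e3, e4]
  field_simp
  ring

include hq hq1 in
lemma Rw_star (a x : ℂ) (n : ℕ) :
    q^(n+1) * ((RPw q a (n+1)).eval (q*x) - (RPw q a (n+1)).eval x)
      = -q * (q^(n+1) - 1) * (1 + a*q^(n+1)) * x * (RPw q (a*q^2) n).eval x := by
  rw [RPw_eval, RPw_eval, RPw_eval, ← sum_sub_distrib, mul_sum, mul_sum, sum_range_succ']
  have h0 : q^(n+1) * (wR q a (n+1) 0 * Pp q (q*x) 0 - wR q a (n+1) 0 * Pp q x 0) = 0 := by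
    simp [Pp]
  rw [h0, add_zero]
  apply sum_congr rfl
  intro k hk
  have hk' : k ≤ n := Nat.lt_succ_iff.mp (mem_range.mp hk)
  have hP := Pp_step (q := q) x k
  have hw := wR_succ hq hq1 a n k hk'
  linear_combination (q^(n+1) * wR q a (n+1) (k+1)) * hP + (x * Pp q x k) * hw

include hq hq1 in
lemma lemA : ∀ n : ℕ, ∀ a : ℂ, a ≠ 0 → (LP q a n).eval 1 = (-1)^n * q^(n^2) * a^n := by
  intro n
  induction n using Nat.strong_induction_on with
  | _ n ih =>
    match n, ih with
    | 0, _ =>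
      intro a _
      simp [LP_eval, cL, qPoch]
    | 1, _ =>
      intro a ha
      have h1q : (1:ℂ) - q ≠ 0 := by
        have := one_sub_qpow_ne hq1 1 one_ne_zero
        simpa using this
      rw [LP_eval, sum_range_succ, sum_range_one]
      simp only [cL, qPoch, prod_range_one, prod_range_zero, pow_zero, pow_one, mul_one,
        one_pow]
      field_simp
      ring
    | (m+2), ih =>
      intro a ha
      by_cases hc : 1 + a*q^(m+2) = 0
      · rw [LP_eval]
        have hsum : ∑ k ∈ range (m+2+1), cL q a (m+2) k * (1:ℂ)^k
            = cL q a (m+2) 0 * (1:ℂ)^0 := by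
          apply Finset.sum_eq_single
          · intro b _ hb
            have hz : qPoch (-(a*q^(m+2))) q b = 0 := by
              rw [qPoch]
              apply prod_eq_zero (mem_range.mpr (Nat.pos_of_ne_zero hb))
              rw [pow_zero, mul_one]
              linear_combination hc
            simp [cL, hz]
          · intro h
            exact absurd (mem_range.mpr (Nat.succ_pos _)) h
        rw [hsum]
        have hm1 : -(a*q^(m+2)) = 1 := by linear_combination -hc
        have h2 : ((-1:ℂ))^(m+2) * q^((m+2)^2) * a^(m+2)
            = ((-1) * q^(m+2) * a)^(m+2) := by
          rw [show (m+2)^2 = (m+2)*(m+2) from by ring, pow_mul, mul_pow, mul_pow]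
        rw [h2, show ((-1:ℂ)) * q^(m+2) * a = -(a*q^(m+2)) from by ring, hm1]
        simp [cL, qPoch]
      · have hgk : (q:ℂ)^(m+2) ≠ 0 := pow_ne_zero _ hq
        have hgk' : (q:ℂ)^(m+1) ≠ 0 := pow_ne_zero _ hq
        have hpow1 : (q:ℂ)^(m+2) ≠ 1 := by
          intro h
          exact hq1 ((m:ℤ)+2) (by omega) (by
            rw [show (m:ℤ)+2 = ((m+2:ℕ):ℤ) from by push_cast; ring, zpow_natCast]; exact h)
        have hg1 : (q:ℂ)^(m+2) - 1 ≠ 0 := sub_ne_zero.mpr hpow1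
        have hM : ((q^(m+2) - 1) * (1 + a*q^(m+2))) * (q^(m+2) * q^(m+1)) ≠ 0 :=
          mul_ne_zero (mul_ne_zero hg1 hc) (mul_ne_zero hgk hgk')
        have E1 := L_star2 hq hq1 a 1 (m+1)
        have E2 := L_star hq hq1 a 1 (m+1)
        have E3 := L_star hq hq1 a q (m+1)
        have E4 := L_star hq hq1 (a*q^2) 1 m
        simp only [mul_one] at E1 E2 E3 E4
        have I1 := ih (m+1) (by omega) (a*q^2) (mul_ne_zero ha (pow_ne_zero 2 hq))
        have I2 := ih m (by omega) (a*q^2*q^2)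
          (mul_ne_zero (mul_ne_zero ha (pow_ne_zero 2 hq)) (pow_ne_zero 2 hq))
        apply mul_right_cancel₀ hM
        linear_combination (q^(m+2)*q^(m+1)) * E1 + (a*q^(m+2)*q^(m+1)) * E3
          + (-(a*q^(m+2)*q^(m+2)-1-a*q^(m+2))*q^(m+1)) * E2
          + (-(a*q^2*((q^(m+2)-1)*(1+a*q^(m+2)))*q^(m+2))) * E4
          + (((q^(m+2)-1)*(1+a*q^(m+2)))*q^(m+1)*
              (q^(m+2)+(a*q^(m+2)*q^(m+2)-1-a*q^(m+2))*q-a*q^2*q^(m+2))) * I1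
          + (a*q^3*((q^(m+2)-1)*(1+a*q^(m+2)))*((q^(m+1)-1)*(1+a*q^2*q^(m+1)))*q^(m+2)) * I2

include hq hq1 in
lemma poly_zero (p : Polynomial ℂ) (hshift : ∀ y : ℂ, p.eval (q*y) = p.eval y)
    (h1 : p.eval 1 = 0) : p = 0 := by
  have hroot : ∀ m : ℕ, p.eval (q^m) = 0 := by
    intro m
    induction m with
    | zero => simpa using h1
    | succ k ihk => rw [pow_succ', hshift (q^k)]; exact ihk
  apply Polynomial.eq_zero_of_infinite_isRoot
  have hinj : Function.Injective (fun m : ℕ => (q^m : ℂ)) := by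
    have key : ∀ i j : ℕ, i < j → (q:ℂ)^i = q^j → False := by
      intro i j hij he
      have h2 : (q:ℂ)^j = q^i * q^(j-i) := by
        rw [← pow_add]
        congr 1
        omega
      have h3 : (q:ℂ)^(j-i) = 1 :=
        mul_left_cancel₀ (pow_ne_zero i hq) (by rw [mul_one]; linear_combination -h2 - he)
      exact hq1 ((j-i : ℕ) : ℤ) (by omega) (by rw [zpow_natCast]; exact h3)
    intro i j he
    by_contra hne
    rcases Nat.lt_or_ge i j with h | h
    · exact key i j h he
    · exact key j i (by omega) he.symm
  exact Set.infinite_of_injective_forall_mem hinj (fun m => hroot m)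

include hq hq1 in
lemma mainLR : ∀ n : ℕ, ∀ a : ℂ, a ≠ 0 → ∀ x : ℂ,
    (LP q a n).eval x = (RPw q a n).eval x := by
  intro n
  induction n with
  | zero =>
    intro a ha x
    rw [LP_eval, RPw_eval]
    simp [cL, wR, Pp, qPoch]
  | succ n IH =>
    intro a ha x
    have hzero : LP q a (n+1) - RPw q a (n+1) = 0 := by
      apply poly_zero hq hq1
      · intro y
        simp only [eval_sub]
        have hL := L_star hq hq1 a y n
        have hR := Rw_star hq hq1 a y n
        have hI := IH (a*q^2) (mul_ne_zero ha (pow_ne_zero 2 hq)) y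
        have hg : (q:ℂ)^(n+1) ≠ 0 := pow_ne_zero _ hq
        apply mul_left_cancel₀ hg
        linear_combination hL - hR + (-q*(q^(n+1)-1)*(1+a*q^(n+1))*y) * hI
      · simp only [eval_sub]
        rw [lemA hq hq1 (n+1) a ha, RPw_eval]
        have hsum : ∑ k ∈ range (n+1+1), wR q a (n+1) k * Pp q 1 k
            = wR q a (n+1) 0 * Pp q 1 0 := by
          apply Finset.sum_eq_single
          · intro b _ hb
            have hz : Pp q 1 b = 0 := by
              rw [Pp]
              apply prod_eq_zero (mem_range.mpr (Nat.pos_of_ne_zero hb))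
              simp
            simp [hz]
          · intro h
            exact absurd (mem_range.mpr (Nat.succ_pos _)) h
        rw [hsum]
        simp [wR, Pp, qPoch]
        ring
    have h := congrArg (Polynomial.eval x) hzero
    simpa [sub_eq_zero] using h
end

/-- Identity between the ₂φ₁ and ₃φ₀ representations of the q-Bessel polynomial
y_n(x;a;q); each term of the ₃φ₀ series carries the factor
((−1)^k q^{k(k−1)/2})^{s−r+1} with s − r + 1 = −2. -/
theorem qBessel_two_representations (q a : ℂ)
    (hq : q ≠ 0) (hq1 : ∀ m : ℤ, m ≠ 0 → q ^ m ≠ 1) (ha : a ≠ 0)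
    (n : ℕ) (x : ℂ) (hx : x ≠ 0) :
    (∑ k ∈ range (n + 1),
        qPoch (q ^ (-(n : ℤ))) q k * qPoch (-a * q ^ n) q k / qPoch q q k * (q * x) ^ k)
    = (-1) ^ n * q ^ (n ^ 2) * a ^ n *
      ∑ k ∈ range (n + 1),
        qPoch (q ^ (-(n : ℤ))) q k * qPoch (-a * q ^ n) q k * qPoch x⁻¹ q k /
          qPoch q q k *
        ((-1 : ℂ) ^ k * q ^ (k * (k - 1) / 2)) ^ (-(2 : ℤ)) * (-a⁻¹ * x) ^ k := by
  have hzn : q ^ (-(n:ℤ)) = (q^n)⁻¹ := by rw [zpow_neg, zpow_natCast]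
  have hmain := mainLR hq hq1 n a ha x
  have hLb : (∑ k ∈ range (n + 1),
      qPoch (q ^ (-(n : ℤ))) q k * qPoch (-a * q ^ n) q k / qPoch q q k * (q * x) ^ k)
      = (LP q a n).eval x := by
    rw [LP_eval]
    apply sum_congr rfl
    intro k _
    rw [hzn, show -a*q^n = -(a*q^n) from by ring, mul_pow]
    simp only [cL]
    ring
  have hRb : (RPw q a n).eval x = (-1) ^ n * q ^ (n ^ 2) * a ^ n *
      ∑ k ∈ range (n + 1),
        qPoch (q ^ (-(n : ℤ))) q k * qPoch (-a * q ^ n) q k * qPoch x⁻¹ q k /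
          qPoch q q k *
        ((-1 : ℂ) ^ k * q ^ (k * (k - 1) / 2)) ^ (-(2 : ℤ)) * (-a⁻¹ * x) ^ k := by
    rw [RPw_eval, mul_sum]
    apply sum_congr rfl
    intro k hk
    have hk' : k ≤ n := Nat.lt_succ_iff.mp (mem_range.mp hk)
    have hW : (((-1:ℂ)) ^ k * q ^ (k * (k - 1) / 2)) ^ (-(2 : ℤ)) = (q^(k*(k-1)))⁻¹ := by
      have hev : Even (k*(k-1)) := by
        rcases k with _ | j
        · simp
        · simpa [Nat.succ_sub_one, mul_comm] using Nat.even_mul_succ_self j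
      have heven : k*(k-1)/2*2 = k*(k-1) := Nat.div_mul_cancel hev.two_dvd
      rw [zpow_neg, show ((2:ℤ)) = ((2:ℕ):ℤ) from rfl, zpow_natCast]
      congr 1
      rw [mul_pow, ← pow_mul, ← pow_mul, heven, mul_comm k 2, pow_mul]
      norm_num
    have hPx : qPoch x⁻¹ q k * x^k = Pp q x k := by
      rw [qPoch, Pp, show (x:ℂ)^k = ∏ _i ∈ range k, x from by
        rw [prod_const, card_range], ← prod_mul_distrib]
      apply prod_congr rfl
      intro i _
      field_simp
    have ea : a^n = a^(n-k) * a^k := by rw [← pow_add, Nat.sub_add_cancel hk']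
    have hkk : k*(k-1) ≤ n^2 := by
      have h1 : k*(k-1) ≤ n*n :=
        Nat.mul_le_mul hk' (le_trans (Nat.sub_le _ _) hk')
      simpa [pow_two] using h1
    have eq2 : q^(n^2) = q^(n^2 - k*(k-1)) * q^(k*(k-1)) := by
      rw [← pow_add, Nat.sub_add_cancel hkk]
    have ca : a^k * (a⁻¹)^k = 1 := by rw [← mul_pow, mul_inv_cancel₀ ha, one_pow]
    have cq : q^(k*(k-1)) * (q^(k*(k-1)))⁻¹ = 1 := mul_inv_cancel₀ (pow_ne_zero _ hq)
    rw [hzn, show -a*q^n = -(a*q^n) from by ring, hW,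
      show (-a⁻¹*x)^k = (-1:ℂ)^k * (a⁻¹)^k * x^k from by
        rw [show -a⁻¹*x = (-1)*a⁻¹*x from by ring, mul_pow, mul_pow],
      ea, eq2]
    simp only [wR, pow_add, ← hPx]
    linear_combination (-((-1:ℂ))^n * (-1:ℂ)^k * q^(n^2-k*(k-1)) * a^(n-k) *
        qPoch ((q^n)⁻¹) q k * qPoch (-(a*q^n)) q k * qPoch x⁻¹ q k * x^k /
        qPoch q q k * q^(k*(k-1)) * (q^(k*(k-1)))⁻¹) * ca
      + (-((-1:ℂ))^n * (-1:ℂ)^k * q^(n^2-k*(k-1)) * a^(n-k) *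
        qPoch ((q^n)⁻¹) q k * qPoch (-(a*q^n)) q k * qPoch x⁻¹ q k * x^k /
        qPoch q q k) * cq
  rw [hLb, hmain, hRb]
end
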